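/- Every Pareto optimal roommate assignment is 4-person stable. -/

import Mathlib

/-- A roommate assignment: each agent has a roommate (`mate`) and a room (`room`);
roommates share a room and each room hosts exactly one pair. -/
structure Assignment (A R : Type*) where
  mate : A → A
  room : A → R
  mate_ne_self : ∀ i, mate i ≠ i
  mate_invol : ∀ i, mate (mate i) = i
  room_mate : ∀ i, room (mate i) = room i
  room_eq_iff : ∀ i j, room i = room j ↔ (j = i ∨ j = mate i)

variable {A R : Type*}

/-- Utility of agent `i` in assignment `μ`: happiness for the roommate plus value of the room. -/
def util (h : A → A → ℝ) (v : A → R → ℝ) (μ : Assignment A R) (i : A) : ℝ :=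
  h i (μ.mate i) + v i (μ.room i)

/-- `(i,j)` is a 2-person-stable blocking pair: they live in different rooms and both would
strictly gain by swapping places. -/
def blocking2PS (h : A → A → ℝ) (v : A → R → ℝ) (μ : Assignment A R) (i j : A) : Prop :=
  μ.room i ≠ μ.room j ∧
  h i (μ.mate j) + v i (μ.room j) > h i (μ.mate i) + v i (μ.room i) ∧
  h j (μ.mate i) + v j (μ.room i) > h j (μ.mate j) + v j (μ.room j)

/-- `(i,j)` is a 4-person-stable blocking pair: in addition, both displaced roommates
strictly prefer their new roommate. -/
def blocking4PS (h : A → A → ℝ) (v : A → R → ℝ) (μ : Assignment A R) (i j : A) : Prop :=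
  blocking2PS h v μ i j ∧
  h (μ.mate i) j > h (μ.mate i) i ∧
  h (μ.mate j) i > h (μ.mate j) j

def is2PS (h : A → A → ℝ) (v : A → R → ℝ) (μ : Assignment A R) : Prop :=
  ∀ i j, ¬ blocking2PS h v μ i j

def is4PS (h : A → A → ℝ) (v : A → R → ℝ) (μ : Assignment A R) : Prop :=
  ∀ i j, ¬ blocking4PS h v μ i j

/-- `μ'` Pareto dominates `μ`. -/
def ParetoDom (h : A → A → ℝ) (v : A → R → ℝ) (μ' μ : Assignment A R) : Prop :=
  (∀ i, util h v μ i ≤ util h v μ' i) ∧ ∃ i, util h v μ i < util h v μ' i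

def ParetoOpt (h : A → A → ℝ) (v : A → R → ℝ) (μ : Assignment A R) : Prop :=
  ∀ μ', ¬ ParetoDom h v μ' μ

/-- `μ'` is the result of swapping agents `i` and `j` in `μ`. -/
def IsSwap (μ μ' : Assignment A R) (i j : A) : Prop :=
  μ'.mate i = μ.mate j ∧ μ'.room i = μ.room j ∧
  μ'.mate j = μ.mate i ∧ μ'.room j = μ.room i ∧
  μ'.room (μ.mate i) = μ.room i ∧ μ'.room (μ.mate j) = μ.room j ∧
  ∀ k, k ≠ i → k ≠ j → k ≠ μ.mate i → k ≠ μ.mate j →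
    μ'.mate k = μ.mate k ∧ μ'.room k = μ.room k

/-- Social welfare: the sum of all agents' utilities. -/
noncomputable def SW [Fintype A] (h : A → A → ℝ) (v : A → R → ℝ) (μ : Assignment A R) : ℝ :=
  ∑ i, util h v μ i


/-- Conjugate an assignment by an involutive permutation. -/
def Assignment.conj (μ : Assignment A R) (σ : Equiv.Perm A) (hσ : ∀ x, σ (σ x) = x) :
    Assignment A R where
  mate k := σ (μ.mate (σ k))
  room k := μ.room (σ k)
  mate_ne_self k hk := by
    have hk' : σ (μ.mate (σ k)) = k := hk
    have := congrArg σ hk'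
    rw [hσ] at this
    exact μ.mate_ne_self (σ k) this
  mate_invol k := by simp only [hσ, μ.mate_invol]
  room_mate k := by simp only [hσ, μ.room_mate]
  room_eq_iff k l := by
    rw [μ.room_eq_iff (σ k) (σ l)]
    constructor
    · rintro (hkl | hkl)
      · left; have := congrArg σ hkl; rwa [hσ, hσ] at this
      · right; have := congrArg σ hkl; rwa [hσ] at this
    · rintro (hkl | hkl)
      · left; rw [hkl]
      · right; rw [hkl, hσ]

/-- Every Pareto optimal roommate assignment is 4-person stable. -/
theorem paretoOpt_is4PS (h : A → A → ℝ) (v : A → R → ℝ) (μ : Assignment A R)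
    (hpo : ParetoOpt h v μ) : is4PS h v μ := by
  intro i j hb
  obtain ⟨⟨hr, hui, huj⟩, hmi, hmj⟩ := hb
  classical
  have hij : i ≠ j := fun hh => hr (by rw [hh])
  have hii' : μ.mate i ≠ i := μ.mate_ne_self i
  have hjj' : μ.mate j ≠ j := μ.mate_ne_self j
  have hj'i : μ.mate j ≠ i := fun hh => hr (by rw [← μ.room_mate j, hh])
  have hi'j : μ.mate i ≠ j := fun hh => hr (by rw [← μ.room_mate i, hh])
  set σ := Equiv.swap i j with hσdef
  have hσ : ∀ x, σ (σ x) = x := fun x => Equiv.swap_apply_self i j x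
  have hσi : σ i = j := Equiv.swap_apply_left i j
  have hσj : σ j = i := Equiv.swap_apply_right i j
  have hσi' : σ (μ.mate i) = μ.mate i := Equiv.swap_apply_of_ne_of_ne hii' hi'j
  have hσj' : σ (μ.mate j) = μ.mate j := Equiv.swap_apply_of_ne_of_ne hj'i hjj'
  set μ' := μ.conj σ hσ with hμ'def
  have hmate' : ∀ k, μ'.mate k = σ (μ.mate (σ k)) := fun _ => rfl
  have hroom' : ∀ k, μ'.room k = μ.room (σ k) := fun _ => rfl
  apply hpo μ'
  constructor
  · intro k
    by_cases hki : k = i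
    · subst hki
      have hk : util h v μ' k = h k (μ.mate j) + v k (μ.room j) := by
        rw [util, hmate' k, hroom' k, hσi, hσj']
      rw [hk]
      exact le_of_lt hui
    by_cases hkj : k = j
    · subst hkj
      have hk : util h v μ' k = h k (μ.mate i) + v k (μ.room i) := by
        rw [util, hmate' k, hroom' k, hσj, hσi']
      rw [hk]
      exact le_of_lt huj
    have hσk : σ k = k := Equiv.swap_apply_of_ne_of_ne hki hkj
    by_cases hki' : k = μ.mate i
    · have hmk : μ.mate k = i := by rw [hki', μ.mate_invol]
      have hk : util h v μ' k = h k j + v k (μ.room k) := by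
        rw [util, hmate' k, hroom' k, hσk, hmk, hσi]
      rw [hk, util, hmk, hki']
      exact add_le_add_left (le_of_lt hmi) _
    by_cases hkj' : k = μ.mate j
    · have hmk : μ.mate k = j := by rw [hkj', μ.mate_invol]
      have hk : util h v μ' k = h k i + v k (μ.room k) := by
        rw [util, hmate' k, hroom' k, hσk, hmk, hσj]
      rw [hk, util, hmk, hkj']
      exact add_le_add_left (le_of_lt hmj) _
    · have h1 : μ.mate k ≠ i := fun hh => hki' (by rw [← hh, μ.mate_invol])
      have h2 : μ.mate k ≠ j := fun hh => hkj' (by rw [← hh, μ.mate_invol])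
      have hk : util h v μ' k = util h v μ k := by
        rw [util, util, hmate' k, hroom' k, hσk, Equiv.swap_apply_of_ne_of_ne h1 h2]
      rw [hk]
  · refine ⟨i, ?_⟩
    have hk : util h v μ' i = h i (μ.mate j) + v i (μ.room j) := by
      rw [util, hmate' i, hroom' i, hσi, hσj']
    rw [hk]
    exact hui
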